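/- S-lemma: Let d ≥ 1 and let A and B be real symmetric d×d matrices such that there exists a vector z̄ ∈ ℝᵈ with z̄ᵀ A z̄ > 0. Then the implication "for all z ∈ ℝᵈ, zᵀ A z ≥ 0 implies zᵀ B z ≥ 0" holds if and only if there exists λ ≥ 0 such that B − λA is positive semidefinite. -/

import Mathlib

open Matrix

section slemma_aux
variable {d : ℕ}

lemma qf_symm {C : Matrix (Fin d) (Fin d) ℝ} (hC : C.IsSymm) (x y : Fin d → ℝ) :
    y ⬝ᵥ C *ᵥ x = x ⬝ᵥ C *ᵥ y := by
  rw [dotProduct_mulVec, ← vecMul_transpose, hC.eq, dotProduct_comm]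

lemma qf_expand (C : Matrix (Fin d) (Fin d) ℝ) (x y : Fin d → ℝ) (a b : ℝ) :
    (a • x + b • y) ⬝ᵥ C *ᵥ (a • x + b • y)
      = a^2 * (x ⬝ᵥ C *ᵥ x) + a*b*(x ⬝ᵥ C *ᵥ y) + a*b*(y ⬝ᵥ C *ᵥ x) + b^2 * (y ⬝ᵥ C *ᵥ y) := by
  simp [mulVec_add, mulVec_smul, dotProduct_add, add_dotProduct, dotProduct_smul, smul_dotProduct,
    smul_eq_mul]
  ring

lemma qf_smul (C : Matrix (Fin d) (Fin d) ℝ) (a : ℝ) (x : Fin d → ℝ) :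
    (a • x) ⬝ᵥ C *ᵥ (a • x) = a^2 * (x ⬝ᵥ C *ᵥ x) := by
  simp [mulVec_smul, dotProduct_smul, smul_eq_mul]; ring

lemma key_pos (C D : Matrix (Fin d) (Fin d) ℝ) (hC : C.IsSymm)
    (x y : Fin d → ℝ) (γ : ℝ) (hγ : γ ≠ 0)
    (hx : x ⬝ᵥ C *ᵥ x = γ) (hy : y ⬝ᵥ C *ᵥ y = γ)
    (hm : 0 ≤ γ * (x ⬝ᵥ C *ᵥ y))
    (r : ℝ) (hr : r ∈ Set.uIcc (x ⬝ᵥ D *ᵥ x) (y ⬝ᵥ D *ᵥ y)) :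
    ∃ z : Fin d → ℝ, z ⬝ᵥ C *ᵥ z = γ ∧ z ⬝ᵥ D *ᵥ z = r := by
  set m := x ⬝ᵥ C *ᵥ y with hmdef
  set dx := x ⬝ᵥ D *ᵥ x with hdx
  set dy := y ⬝ᵥ D *ᵥ y with hdy
  set dm := x ⬝ᵥ D *ᵥ y + y ⬝ᵥ D *ᵥ x with hdm
  set φ : ℝ → ℝ := fun s => ((1-s)^2 + s^2) * γ + 2*s*(1-s)*m with hφdef
  set Dv : ℝ → ℝ := fun s => (1-s)^2 * dx + s*(1-s)*dm + s^2 * dy with hDvdef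
  have hφval : ∀ s : ℝ, ((1-s) • x + s • y) ⬝ᵥ C *ᵥ ((1-s) • x + s • y) = φ s := by
    intro s
    rw [qf_expand, hx, hy, qf_symm hC x y, ← hmdef]
    simp only [hφdef]; ring
  have hDval : ∀ s : ℝ, ((1-s) • x + s • y) ⬝ᵥ D *ᵥ ((1-s) • x + s • y) = Dv s := by
    intro s
    rw [qf_expand, ← hdx, ← hdy]
    simp only [hDvdef, hdm]; ring
  have hφpos : ∀ s ∈ Set.Icc (0:ℝ) 1, 0 < γ * φ s := by
    intro s hs
    have h1 : 0 ≤ s := hs.1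
    have h2 : s ≤ 1 := hs.2
    have h3 : 0 ≤ 2*s*(1-s) := by nlinarith
    have h4 : 0 ≤ 2*s*(1-s)*(γ*m) := mul_nonneg h3 hm
    have h5 : 0 < γ^2 := by positivity
    simp only [hφdef]
    nlinarith [sq_nonneg (2*s-1)]
  set ψ : ℝ → ℝ := fun s => (γ / φ s) * Dv s with hψdef
  have hφcont : Continuous φ := by fun_prop
  have hDvcont : Continuous Dv := by fun_prop
  have hcont : ContinuousOn ψ (Set.Icc (0:ℝ) 1) := by
    apply ContinuousOn.mul _ hDvcont.continuousOn
    apply ContinuousOn.div continuousOn_const hφcont.continuousOn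
    intro s hs h0
    have := hφpos s hs
    rw [h0, mul_zero] at this
    exact lt_irrefl 0 this
  have hψ0 : ψ 0 = dx := by simp only [hψdef, hφdef, hDvdef]; norm_num; field_simp
  have hψ1 : ψ 1 = dy := by simp only [hψdef, hφdef, hDvdef]; norm_num; field_simp
  have huIcc : Set.uIcc (0:ℝ) 1 = Set.Icc 0 1 := Set.uIcc_of_le zero_le_one
  have hrmem : r ∈ Set.uIcc (ψ 0) (ψ 1) := by rw [hψ0, hψ1]; exact hr
  obtain ⟨s₀, hs₀, hψs₀⟩ := intermediate_value_uIcc (by rw [huIcc]; exact hcont) hrmem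
  rw [huIcc] at hs₀
  have hpos : 0 < γ * φ s₀ := hφpos s₀ hs₀
  have hφne : φ s₀ ≠ 0 := by intro h0; rw [h0, mul_zero] at hpos; exact lt_irrefl 0 hpos
  have hqpos : 0 < γ / φ s₀ := by
    rw [div_pos_iff]
    rcases mul_pos_iff.mp hpos with ⟨h1, h2⟩ | ⟨h1, h2⟩
    · exact Or.inl ⟨h1, h2⟩
    · exact Or.inr ⟨h1, h2⟩
  refine ⟨Real.sqrt (γ / φ s₀) • ((1-s₀) • x + s₀ • y), ?_, ?_⟩
  · rw [qf_smul, hφval, Real.sq_sqrt hqpos.le, div_mul_cancel₀ _ hφne]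
  · rw [qf_smul, hDval, Real.sq_sqrt hqpos.le, ← hψs₀]

lemma qf_scale_pt (C D : Matrix (Fin d) (Fin d) ℝ) (x : Fin d → ℝ)
    (hx : x ⬝ᵥ C *ᵥ x = 0) (r : ℝ)
    (h : (0 < r ∧ r ≤ x ⬝ᵥ D *ᵥ x) ∨ (x ⬝ᵥ D *ᵥ x ≤ r ∧ r < 0)) :
    ∃ z : Fin d → ℝ, z ⬝ᵥ C *ᵥ z = 0 ∧ z ⬝ᵥ D *ᵥ z = r := by
  set dx := x ⬝ᵥ D *ᵥ x with hdx
  have hc : 0 < r / dx ∧ r / dx * dx = r := by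
    rcases h with ⟨h1, h2⟩ | ⟨h1, h2⟩
    · have hdxpos : 0 < dx := lt_of_lt_of_le h1 h2
      exact ⟨div_pos h1 hdxpos, div_mul_cancel₀ r hdxpos.ne'⟩
    · have hdxneg : dx < 0 := lt_of_le_of_lt h1 h2
      exact ⟨div_pos_of_neg_of_neg h2 hdxneg, div_mul_cancel₀ r hdxneg.ne⟩
  refine ⟨Real.sqrt (r / dx) • x, ?_, ?_⟩
  · rw [qf_smul, hx, mul_zero]
  · rw [qf_smul, Real.sq_sqrt hc.1.le, ← hdx, hc.2]

/-- Key step for Dines' theorem. -/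
lemma qf_key (C D : Matrix (Fin d) (Fin d) ℝ) (hC : C.IsSymm)
    (x y : Fin d → ℝ) (γ : ℝ)
    (hx : x ⬝ᵥ C *ᵥ x = γ) (hy : y ⬝ᵥ C *ᵥ y = γ)
    (r : ℝ) (hr : r ∈ Set.uIcc (x ⬝ᵥ D *ᵥ x) (y ⬝ᵥ D *ᵥ y)) :
    ∃ z : Fin d → ℝ, z ⬝ᵥ C *ᵥ z = γ ∧ z ⬝ᵥ D *ᵥ z = r := by
  rcases eq_or_ne γ 0 with hγ | hγ
  · subst hγ
    rcases lt_trichotomy r 0 with h0 | h0 | h0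
    · rcases le_or_gt (x ⬝ᵥ D *ᵥ x) r with h1 | h1
      · exact qf_scale_pt C D x hx r (Or.inr ⟨h1, h0⟩)
      · have h2 : y ⬝ᵥ D *ᵥ y ≤ r := by
          rcases Set.mem_uIcc.mp hr with ⟨ha, hb⟩ | ⟨ha, hb⟩
          · linarith
          · exact ha
        exact qf_scale_pt C D y hy r (Or.inr ⟨h2, h0⟩)
    · exact ⟨0, by simp, by simp [h0.symm]⟩
    · rcases le_or_gt r (x ⬝ᵥ D *ᵥ x) with h1 | h1
      · exact qf_scale_pt C D x hx r (Or.inl ⟨h0, h1⟩)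
      · have h2 : r ≤ y ⬝ᵥ D *ᵥ y := by
          rcases Set.mem_uIcc.mp hr with ⟨ha, hb⟩ | ⟨ha, hb⟩
          · exact hb
          · linarith
        exact qf_scale_pt C D y hy r (Or.inl ⟨h0, h2⟩)
  · rcases le_or_gt 0 (γ * (x ⬝ᵥ C *ᵥ y)) with hm | hm
    · exact key_pos C D hC x y γ hγ hx hy hm r hr
    · have hy' : (-y) ⬝ᵥ C *ᵥ (-y) = γ := by simp [mulVec_neg, hy]
      have hm' : 0 ≤ γ * (x ⬝ᵥ C *ᵥ (-y)) := by
        have h : x ⬝ᵥ C *ᵥ (-y) = -(x ⬝ᵥ C *ᵥ y) := by simp [mulVec_neg]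
        rw [h]; nlinarith
      have hr' : r ∈ Set.uIcc (x ⬝ᵥ D *ᵥ x) ((-y) ⬝ᵥ D *ᵥ (-y)) := by
        have h : (-y) ⬝ᵥ D *ᵥ (-y) = y ⬝ᵥ D *ᵥ y := by simp [mulVec_neg]
        rw [h]; exact hr
      exact key_pos C D hC x (-y) γ hγ hx hy' hm' r hr'

/-- Dines' theorem, pointwise form. -/
lemma qf_dines (A B : Matrix (Fin d) (Fin d) ℝ) (hA : A.IsSymm) (hB : B.IsSymm)
    (x y : Fin d → ℝ) (t : ℝ) (ht0 : 0 ≤ t) (ht1 : t ≤ 1) :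
    ∃ z : Fin d → ℝ,
      z ⬝ᵥ A *ᵥ z = (1-t) * (x ⬝ᵥ A *ᵥ x) + t * (y ⬝ᵥ A *ᵥ y) ∧
      z ⬝ᵥ B *ᵥ z = (1-t) * (x ⬝ᵥ B *ᵥ x) + t * (y ⬝ᵥ B *ᵥ y) := by
  by_cases hpq : x ⬝ᵥ A *ᵥ x = y ⬝ᵥ A *ᵥ y ∧ x ⬝ᵥ B *ᵥ x = y ⬝ᵥ B *ᵥ y
  · exact ⟨x, by rw [← hpq.1]; ring, by rw [← hpq.2]; ring⟩
  set a₁ := x ⬝ᵥ A *ᵥ x with ha₁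
  set b₁ := x ⬝ᵥ B *ᵥ x with hb₁
  set a₂ := y ⬝ᵥ A *ᵥ y with ha₂
  set b₂ := y ⬝ᵥ B *ᵥ y with hb₂
  set C := (b₁ - b₂) • A + (a₂ - a₁) • B with hCdef
  set D := (a₂ - a₁) • A + (b₂ - b₁) • B with hDdef
  have hCs : C.IsSymm := by rw [hCdef]; exact (hA.smul _).add (hB.smul _)
  have hCval : ∀ z : Fin d → ℝ,
      z ⬝ᵥ C *ᵥ z = (b₁ - b₂) * (z ⬝ᵥ A *ᵥ z) + (a₂ - a₁) * (z ⬝ᵥ B *ᵥ z) := by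
    intro z; rw [hCdef]
    simp [add_mulVec, smul_mulVec, dotProduct_add, dotProduct_smul, smul_eq_mul]
  have hDval : ∀ z : Fin d → ℝ,
      z ⬝ᵥ D *ᵥ z = (a₂ - a₁) * (z ⬝ᵥ A *ᵥ z) + (b₂ - b₁) * (z ⬝ᵥ B *ᵥ z) := by
    intro z; rw [hDdef]
    simp [add_mulVec, smul_mulVec, dotProduct_add, dotProduct_smul, smul_eq_mul]
  set γ := a₂ * b₁ - a₁ * b₂ with hγ
  have hxC : x ⬝ᵥ C *ᵥ x = γ := by rw [hCval, ← ha₁, ← hb₁, hγ]; ring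
  have hyC : y ⬝ᵥ C *ᵥ y = γ := by rw [hCval, ← ha₂, ← hb₂, hγ]; ring
  set r := (1-t) * (x ⬝ᵥ D *ᵥ x) + t * (y ⬝ᵥ D *ᵥ y) with hrdef
  have hrmem : r ∈ Set.uIcc (x ⬝ᵥ D *ᵥ x) (y ⬝ᵥ D *ᵥ y) := by
    rw [Set.mem_uIcc]
    rcases le_total (x ⬝ᵥ D *ᵥ x) (y ⬝ᵥ D *ᵥ y) with h | h
    · left; constructor <;> rw [hrdef] <;> nlinarith
    · right; constructor <;> rw [hrdef] <;> nlinarith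
  obtain ⟨z, hzC, hzD⟩ := qf_key C D hCs x y γ hxC hyC r hrmem
  rw [hCval] at hzC
  rw [hDval] at hzD
  have hreq : r = (a₂ - a₁) * ((1-t)*a₁ + t*a₂) + (b₂ - b₁) * ((1-t)*b₁ + t*b₂) := by
    rw [hrdef, hDval x, hDval y, ← ha₁, ← hb₁, ← ha₂, ← hb₂]; ring
  have e1 : (b₁ - b₂) * (z ⬝ᵥ A *ᵥ z - ((1-t)*a₁ + t*a₂))
      + (a₂ - a₁) * (z ⬝ᵥ B *ᵥ z - ((1-t)*b₁ + t*b₂)) = 0 := by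
    have hγeq : (b₁ - b₂) * ((1-t)*a₁ + t*a₂) + (a₂ - a₁) * ((1-t)*b₁ + t*b₂) = γ := by
      rw [hγ]; ring
    linear_combination hzC - hγeq
  have e2 : (a₂ - a₁) * (z ⬝ᵥ A *ᵥ z - ((1-t)*a₁ + t*a₂))
      + (b₂ - b₁) * (z ⬝ᵥ B *ᵥ z - ((1-t)*b₁ + t*b₂)) = 0 := by
    linear_combination hzD.trans hreq
  have hd2 : (0:ℝ) < (a₂ - a₁)^2 + (b₂ - b₁)^2 := by
    rcases not_and_or.mp hpq with h | h
    · have h' : a₂ - a₁ ≠ 0 := fun h0 => h (by rw [ha₁, ha₂] at *; linarith)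
      positivity
    · have h' : b₂ - b₁ ≠ 0 := fun h0 => h (by rw [hb₁, hb₂] at *; linarith)
      positivity
  have hu : ((a₂ - a₁)^2 + (b₂ - b₁)^2) * (z ⬝ᵥ A *ᵥ z - ((1-t)*a₁ + t*a₂)) = 0 := by
    linear_combination (a₂ - a₁) * e2 - (b₂ - b₁) * e1
  have hv : ((a₂ - a₁)^2 + (b₂ - b₁)^2) * (z ⬝ᵥ B *ᵥ z - ((1-t)*b₁ + t*b₂)) = 0 := by
    linear_combination (b₂ - b₁) * e2 + (a₂ - a₁) * e1
  have hu' := (mul_eq_zero.mp hu).resolve_left hd2.ne'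
  have hv' := (mul_eq_zero.mp hv).resolve_left hd2.ne'
  exact ⟨z, by linarith, by linarith⟩




lemma qf_sub (A B : Matrix (Fin d) (Fin d) ℝ) (lam : ℝ) (z : Fin d → ℝ) :
    z ⬝ᵥ (B - lam • A) *ᵥ z = z ⬝ᵥ B *ᵥ z - lam * (z ⬝ᵥ A *ᵥ z) := by
  simp [sub_mulVec, smul_mulVec, dotProduct_sub, dotProduct_smul, smul_eq_mul]

end slemma_aux

/-- **S-lemma.** For real symmetric `d × d` matrices `A`, `B` with `d ≥ 1`, if there is a
vector `z̄` with `z̄ᵀ A z̄ > 0`, then the implication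
`∀ z, zᵀ A z ≥ 0 → zᵀ B z ≥ 0` holds iff there is `λ ≥ 0` with `B - λ • A`
positive semidefinite (i.e. `zᵀ (B - λA) z ≥ 0` for all `z`). -/
theorem s_lemma (d : ℕ) (hd : 1 ≤ d)
    (A B : Matrix (Fin d) (Fin d) ℝ) (hA : A.IsSymm) (hB : B.IsSymm)
    (zbar : Fin d → ℝ) (hzbar : 0 < zbar ⬝ᵥ A *ᵥ zbar) :
    (∀ z : Fin d → ℝ, 0 ≤ z ⬝ᵥ A *ᵥ z → 0 ≤ z ⬝ᵥ B *ᵥ z) ↔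
      ∃ lam : ℝ, 0 ≤ lam ∧ ∀ z : Fin d → ℝ, 0 ≤ z ⬝ᵥ (B - lam • A) *ᵥ z := by
  constructor
  · intro h
    -- the joint-range set
    set N : Set (ℝ × ℝ) := {p | ∃ z : Fin d → ℝ, p = (z ⬝ᵥ A *ᵥ z, z ⬝ᵥ B *ᵥ z)} with hN
    have hNconv : Convex ℝ N := by
      rintro p ⟨zx, rfl⟩ q ⟨zy, rfl⟩ a b ha hb hab
      obtain ⟨z, h1, h2⟩ := qf_dines A B hA hB zx zy b hb (by linarith)
      refine ⟨z, ?_⟩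
      have ha' : a = 1 - b := by linarith
      rw [Prod.ext_iff]
      constructor <;> simp [h1, h2, ha'] <;> ring
    set U : Set (ℝ × ℝ) := {p | 0 < p.1 ∧ p.2 < 0} with hU
    have hUopen : IsOpen U := by
      apply IsOpen.inter
      · exact isOpen_lt continuous_const continuous_fst
      · exact isOpen_lt continuous_snd continuous_const
    have hUconv : Convex ℝ U := by
      rintro p ⟨hp1, hp2⟩ q ⟨hq1, hq2⟩ a b ha hb hab
      constructor
      · simp only [Prod.fst_add, Prod.smul_fst, smul_eq_mul]
        rcases eq_or_lt_of_le ha with rfl | ha'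
        · simp only [zero_mul, zero_add]; have : b = 1 := by linarith
          nlinarith
        · nlinarith
      · simp only [Prod.snd_add, Prod.smul_snd, smul_eq_mul]
        rcases eq_or_lt_of_le ha with rfl | ha'
        · have hb1 : b = 1 := by linarith
          nlinarith
        · nlinarith
    have hdisj : Disjoint U N := by
      rw [Set.disjoint_left]
      rintro p ⟨hp1, hp2⟩ ⟨z, rfl⟩
      exact absurd (h z hp1.le) (not_le.mpr hp2)
    obtain ⟨f, u, hfU, hfN⟩ := geometric_hahn_banach_open hUconv hUopen hNconv hdisj
    have h0N : ((0:ℝ), (0:ℝ)) ∈ N := ⟨0, by simp⟩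
    have hu0 : u ≤ 0 := by simpa [Prod.mk_zero_zero] using hfN _ h0N
    have hfv : ∀ a b : ℝ, f (a, b) = a * f (1, 0) + b * f (0, 1) := by
      intro a b
      have : (a, b) = a • ((1:ℝ), (0:ℝ)) + b • ((0:ℝ), (1:ℝ)) := by
        simp [Prod.ext_iff]
      rw [this, map_add, _root_.map_smul, _root_.map_smul]; simp
    set c₁ := f (1, 0) with hc₁
    set c₂ := f (0, 1) with hc₂
    have hUineq : ∀ a b : ℝ, 0 < a → b < 0 → a * c₁ + b * c₂ < u := by
      intro a b ha hb
      have := hfU (a, b) ⟨ha, hb⟩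
      rwa [hfv] at this
    -- u = 0
    have hu0' : 0 ≤ u := by
      by_contra hcon
      push_neg at hcon
      have h1 : 1 * c₁ + (-1) * c₂ < u := hUineq 1 (-1) one_pos (by norm_num)
      have hneg : c₁ - c₂ < u := by linarith
      set ε : ℝ := u / (c₁ - c₂) with hε
      have hd : c₁ - c₂ < 0 := lt_trans hneg hcon
      have hεpos : 0 < ε := div_pos_of_neg_of_neg hcon hd
      have h2 : ε * c₁ + (-ε) * c₂ < u := hUineq ε (-ε) hεpos (by linarith)
      have h3 : ε * (c₁ - c₂) = u := div_mul_cancel₀ u hd.ne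
      nlinarith
    have huz : u = 0 := le_antisymm hu0 hu0'
    -- c₁ ≤ 0
    have hc1le : c₁ ≤ 0 := by
      by_contra hcon
      push_neg at hcon
      have h1 := hUineq (max 1 ((u + c₂)/c₁ + 1)) (-1) (lt_of_lt_of_le one_pos (le_max_left _ _)) (by norm_num)
      have h2 : (u + c₂)/c₁ + 1 ≤ max 1 ((u + c₂)/c₁ + 1) := le_max_right _ _
      have h3 : (u + c₂)/c₁ * c₁ = u + c₂ := div_mul_cancel₀ _ hcon.ne'
      nlinarith
    -- c₂ ≥ 0
    have hc2ge : 0 ≤ c₂ := by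
      by_contra hcon
      push_neg at hcon
      have hble : min (-1) ((u - c₁)/c₂) < 0 := lt_of_le_of_lt (min_le_left _ _) (by norm_num)
      have h1 := hUineq 1 (min (-1) ((u - c₁)/c₂)) one_pos hble
      have h2 : min (-1) ((u - c₁)/c₂) ≤ (u - c₁)/c₂ := min_le_right _ _
      have h3 : (u - c₁)/c₂ * c₂ = u - c₁ := div_mul_cancel₀ _ hcon.ne
      nlinarith [mul_le_mul_of_nonpos_right h2 hcon.le]
    -- the inequality on N
    have hNineq : ∀ z : Fin d → ℝ, 0 ≤ c₁ * (z ⬝ᵥ A *ᵥ z) + c₂ * (z ⬝ᵥ B *ᵥ z) := by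
      intro z
      have := hfN _ ⟨z, rfl⟩
      rw [hfv, huz] at this
      linarith
    -- c₂ > 0
    have hc2pos : 0 < c₂ := by
      rcases eq_or_lt_of_le hc2ge with hc20 | h
      · exfalso
        have h1 := hUineq 1 (-1) one_pos (by norm_num)
        rw [huz, ← hc20] at h1
        have hc1neg : c₁ < 0 := by linarith
        have h2 := hNineq zbar
        rw [← hc20] at h2
        nlinarith
      · exact h
    refine ⟨-c₁ / c₂, div_nonneg (by linarith) hc2pos.le, ?_⟩
    intro z
    rw [qf_sub]
    have h1 := hNineq z
    have h2 : z ⬝ᵥ B *ᵥ z - (-c₁/c₂) * (z ⬝ᵥ A *ᵥ z)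
        = (c₁ * (z ⬝ᵥ A *ᵥ z) + c₂ * (z ⬝ᵥ B *ᵥ z)) / c₂ := by
      field_simp
      ring
    rw [h2]
    exact div_nonneg h1 hc2pos.le
  · rintro ⟨lam, hlam, hpsd⟩ z hz
    have := hpsd z
    rw [qf_sub] at this
    nlinarith
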